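/- Let f be an orientation-preserving homeomorphism of ℝ² and I an isotopy from the identity to f. Given z' ∈ Fix(f), there exists a neighborhood W of infinity in ℝ² such that for every z ∈ W ∩ Fix(f), the rotation number ρ_{I,z'}(z) equals Tourne_I(z), i.e. Enlace_I(z, z') = Tourne_I(z). -/

import Mathlib

open MeasureTheory Filter Topology Set Metric

noncomputable section

attribute [local instance] Classical.propDecidable

/-- An isotopy (within homeomorphisms of `X`) from the identity to `f`,
parametrised by `t ∈ [0,1]` (the values for `t ∉ [0,1]` are irrelevant). -/
structure HIsotopy {X : Type*} [TopologicalSpace X] (f : X ≃ₜ X) where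
  F : ℝ → X ≃ₜ X
  cont : Continuous fun p : ℝ × X => F p.1 p.2
  cont_symm : Continuous fun p : ℝ × X => (F p.1).symm p.2
  zero : F 0 = Homeomorph.refl X
  one : F 1 = f

/-- The set of fixed points of a map. -/
def FixPts {X : Type*} (g : X → X) : Set X := {z | g z = z}

/-- The set of positively recurrent points of `f`. -/
def RecPlus (f : ℂ ≃ₜ ℂ) : Set ℂ :=
  {z | ∃ n : ℕ → ℕ, StrictMono n ∧ Tendsto (fun k => (⇑f)^[n k] z) atTop (𝓝 z)}

/-- The total angular variation (number of turns around the origin, i.e. the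
integral of the polar-angle form `dθ`) of a continuous path `[0,1] → ℂ ∖ {0}`,
defined via a continuous lift of the argument (junk value otherwise). -/
def angVar (γ : ℝ → ℂ) : ℝ :=
  if h : ∃ θ : ℝ → ℝ, ContinuousOn θ (Set.Icc 0 1) ∧
      ∀ t ∈ Set.Icc (0 : ℝ) 1, γ t = (‖γ t‖ : ℂ) * Complex.exp ((θ t : ℂ) * Complex.I)
  then (h.choose 1 - h.choose 0) / (2 * Real.pi)
  else 0

/-- `Enlace_I(z,z')`: the integral of `dθ` along `t ↦ f_t(z) - f_t(z')`. -/
def Enlace {f : ℂ ≃ₜ ℂ} (I : HIsotopy f) (z z' : ℂ) : ℝ :=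
  angVar fun t => I.F t z - I.F t z'

/-- `Tourne_I(z)`: the integral of `dθ` along `t ↦ f_t(z)`. -/
def Tourne {f : ℂ ≃ₜ ℂ} (I : HIsotopy f) (z : ℂ) : ℝ :=
  angVar fun t => I.F t z

/-- Property (P1): `Enlace_I` is bounded on pairs of distinct fixed points. -/
def P1 {f : ℂ ≃ₜ ℂ} (I : HIsotopy f) : Prop :=
  ∃ M : ℝ, ∀ z ∈ FixPts ⇑f, ∀ z' ∈ FixPts ⇑f, z ≠ z' → |Enlace I z z'| ≤ M

/-- Property (P2): `Tourne_I` is constant on the fixed points in a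
neighbourhood of infinity (i.e. outside some compact set). -/
def P2 {f : ℂ ≃ₜ ℂ} (I : HIsotopy f) : Prop :=
  ∃ K : Set ℂ, IsCompact K ∧
    ∀ z ∈ FixPts ⇑f \ K, ∀ z' ∈ FixPts ⇑f \ K, Tourne I z = Tourne I z'

/-- An isotopy is adapted if `Tourne_I` vanishes on the fixed points in a
neighbourhood of infinity. -/
def Adapted {f : ℂ ≃ₜ ℂ} (I : HIsotopy f) : Prop :=
  ∃ K : Set ℂ, IsCompact K ∧ ∀ z ∈ FixPts ⇑f \ K, Tourne I z = 0

/-- The orbit of `z` has rotation number `ρ` around `z'` (with respect to the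
isotopy `I`): along every strictly increasing sequence of integers `(n k)` with
`f^[n k] z → z`, the Birkhoff averages of `Enlace I · z'` converge to `ρ`. -/
def HasRot {f : ℂ ≃ₜ ℂ} (I : HIsotopy f) (z' z : ℂ) (ρ : ℝ) : Prop :=
  ∀ n : ℕ → ℕ, StrictMono n → Tendsto (fun k => (⇑f)^[n k] z) atTop (𝓝 z) →
    Tendsto (fun k => (∑ r ∈ Finset.range (n k), Enlace I ((⇑f)^[r] z) z') / (n k : ℝ))
      atTop (𝓝 ρ)

/-- The rotation number `ρ_{z'}(z)` as a function (junk value `0` if it is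
not defined). -/
def rho {f : ℂ ≃ₜ ℂ} (I : HIsotopy f) (z' z : ℂ) : ℝ :=
  if h : ∃ ρ : ℝ, HasRot I z' z ρ then h.choose else 0

/-- A free disc for `f`: an open set homeomorphic to the plane and disjoint
from its image. -/
def FreeDisc (f : ℂ ≃ₜ ℂ) (U : Set ℂ) : Prop :=
  IsOpen U ∧ Nonempty (U ≃ₜ ℂ) ∧ Disjoint (⇑f '' U) U

/-- The first return time `τ_U(z)` to `U` (junk value `0` if the orbit never
returns). -/
def retTime (f : ℂ ≃ₜ ℂ) (U : Set ℂ) (z : ℂ) : ℕ :=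
  sInf {n : ℕ | 0 < n ∧ (⇑f)^[n] z ∈ U}

/-- `γ` is a path in `U` from `x` to `y` (parametrised by `[0,1]`). -/
def IsPathIn (U : Set ℂ) (x y : ℂ) (γ : ℝ → ℂ) : Prop :=
  ContinuousOn γ (Set.Icc 0 1) ∧ (∀ t ∈ Set.Icc (0 : ℝ) 1, γ t ∈ U) ∧ γ 0 = x ∧ γ 1 = y

/-- `α_{U,z'}(z) = Σ_{0 ≤ ℓ < τ_U(z)} Enlace_I(f^ℓ(z),z') + ∫_{γ_{U,z} - z'} dθ`,
where `γ_{U,z}` is a path in `U` joining the first return `F_U(z)` to `z`. -/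
def alphaU {f : ℂ ≃ₜ ℂ} (I : HIsotopy f) (U : Set ℂ) (z' z : ℂ) : ℝ :=
  (∑ ℓ ∈ Finset.range (retTime f U z), Enlace I ((⇑f)^[ℓ] z) z') +
    if h : ∃ γ : ℝ → ℂ, IsPathIn U ((⇑f)^[retTime f U z] z) z γ
    then angVar fun t => h.choose t - z' else 0

/-- `α̂_{U,R}(z) = sup { |α_{U,z'}(z)| : z' ∈ Fix(f), ‖z'‖ ≥ R }`. -/
def alphaHat {f : ℂ ≃ₜ ℂ} (I : HIsotopy f) (U : Set ℂ) (R : ℝ) (z : ℂ) : ℝ :=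
  sSup {a : ℝ | ∃ z' ∈ FixPts ⇑f, R ≤ ‖z'‖ ∧ a = |alphaU I U z' z|}

/-- The (closed) support of a measure. -/
def measSupport {X : Type*} [TopologicalSpace X] {m : MeasurableSpace X}
    (μ : Measure X) : Set X :=
  {x | ∀ U : Set X, IsOpen U → x ∈ U → μ U ≠ 0}

/-- The standard unit sphere `S² ⊂ ℝ³`. -/
notation "𝕊²" => Metric.sphere (0 : EuclideanSpace ℝ (Fin 3)) 1

instance : Fact (Module.finrank ℝ (EuclideanSpace ℝ (Fin 3)) = 3) :=
  ⟨finrank_euclideanSpace_fin⟩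

open Manifold in
/-- `g` is a `C¹` diffeomorphism of the standard sphere. -/
def IsC1SphereDiffeo (g : 𝕊² → 𝕊²) : Prop :=
  Function.Bijective g ∧ ContMDiff (𝓡 2) (𝓡 2) 1 g ∧
    ∃ g' : 𝕊² → 𝕊², Function.LeftInverse g' g ∧ Function.RightInverse g' g ∧
      ContMDiff (𝓡 2) (𝓡 2) 1 g'

/-- `f` extends to a `C¹` diffeomorphism of `S² = ℝ² ⊔ {∞}` for some smooth
structure on `S²`: transporting the extension of `f` to the one-point
compactification through some homeomorphism with the standard sphere yields a
`C¹` diffeomorphism. -/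
def ExtendsToC1SphereDiffeo (f : ℂ ≃ₜ ℂ) : Prop :=
  ∃ φ : OnePoint ℂ ≃ₜ 𝕊², IsC1SphereDiffeo fun x => φ (OnePoint.map (⇑f) (φ.symm x))

/-- The commutator loop `t ↦ [f₁^t, f₂^t] = f₁^t ∘ f₂^t ∘ (f₁^t)⁻¹ ∘ (f₂^t)⁻¹`. -/
def commLoop {X : Type*} [TopologicalSpace X] {f₁ f₂ : X ≃ₜ X}
    (I₁ : HIsotopy f₁) (I₂ : HIsotopy f₂) (t : ℝ) : X ≃ₜ X :=
  (I₂.F t).symm.trans ((I₁.F t).symm.trans ((I₂.F t).trans (I₁.F t)))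

/-- The invariant `W(f₁,f₂)` vanishes: for isotopies from the identity to
`f₁`, `f₂`, the commutator loop is null-homotopic (rel basepoint) in the group
of homeomorphisms. -/
def WVanishes {X : Type*} [TopologicalSpace X] (f₁ f₂ : X ≃ₜ X) : Prop :=
  ∃ (I₁ : HIsotopy f₁) (I₂ : HIsotopy f₂) (H : ℝ → ℝ → X ≃ₜ X),
    Continuous (fun p : (ℝ × ℝ) × X => H p.1.1 p.1.2 p.2) ∧
    Continuous (fun p : (ℝ × ℝ) × X => (H p.1.1 p.1.2).symm p.2) ∧
    (∀ t, H 0 t = commLoop I₁ I₂ t) ∧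
    (∀ t, H 1 t = Homeomorph.refl X) ∧
    (∀ s, H s 0 = Homeomorph.refl X) ∧
    (∀ s, H s 1 = Homeomorph.refl X)

/-- The shorter great-circle arc joining `p` to `z` on the unit sphere
(for `z` neither `p` nor its antipode): the points of the sphere which are
nonnegative linear combinations of `p` and `z`. -/
def minorArcS (p z : 𝕊²) : Set 𝕊² :=
  {x | ∃ a b : ℝ, 0 ≤ a ∧ 0 ≤ b ∧
    (x : EuclideanSpace ℝ (Fin 3)) =
      a • (p : EuclideanSpace ℝ (Fin 3)) + b • (z : EuclideanSpace ℝ (Fin 3))}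

/-- The longer great-circle arc joining `p` to `z` on the unit sphere. -/
def majorArcS (p z : 𝕊²) : Set 𝕊² :=
  {x | ∃ a b : ℝ, (a ≤ 0 ∨ b ≤ 0) ∧
    (x : EuclideanSpace ℝ (Fin 3)) =
      a • (p : EuclideanSpace ℝ (Fin 3)) + b • (z : EuclideanSpace ℝ (Fin 3))}



/-- Any two continuous argument lifts of a nonvanishing path have the same total variation. -/
lemma lift_diff_eq (γ : ℝ → ℂ) (hγ : ∀ t ∈ Icc (0:ℝ) 1, γ t ≠ 0)
    (θ θ' : ℝ → ℝ)
    (hθc : ContinuousOn θ (Icc 0 1)) (hθ'c : ContinuousOn θ' (Icc 0 1))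
    (hθ : ∀ t ∈ Icc (0:ℝ) 1, γ t = (‖γ t‖ : ℂ) * Complex.exp ((θ t : ℂ) * Complex.I))
    (hθ' : ∀ t ∈ Icc (0:ℝ) 1, γ t = (‖γ t‖ : ℂ) * Complex.exp ((θ' t : ℂ) * Complex.I)) :
    θ 1 - θ 0 = θ' 1 - θ' 0 := by
  have key : ∀ t ∈ Icc (0:ℝ) 1, ∃ n : ℤ, θ t - θ' t = n * (2 * Real.pi) := by
    intro t ht
    have hne : (‖γ t‖ : ℂ) ≠ 0 := by
      simpa using (norm_ne_zero_iff.mpr (hγ t ht))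
    have hexp : Complex.exp ((θ t : ℂ) * Complex.I) = Complex.exp ((θ' t : ℂ) * Complex.I) :=
      mul_left_cancel₀ hne ((hθ t ht).symm.trans (hθ' t ht))
    obtain ⟨n, hn⟩ := Complex.exp_eq_exp_iff_exists_int.mp hexp
    refine ⟨n, ?_⟩
    have : ((θ t : ℂ) - (θ' t : ℂ)) * Complex.I = ((n : ℂ) * (2 * Real.pi)) * Complex.I := by
      rw [sub_mul, hn]; ring
    have h2 := mul_right_cancel₀ Complex.I_ne_zero this
    have : ((θ t - θ' t : ℝ) : ℂ) = (((n : ℝ) * (2 * Real.pi) : ℝ) : ℂ) := by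
      push_cast; push_cast at h2; linear_combination h2
    exact_mod_cast this
  set d : ℝ → ℝ := fun t => θ t - θ' t with hd
  have hdc : ContinuousOn d (Icc 0 1) := hθc.sub hθ'c
  obtain ⟨m, hm⟩ := key 0 (by norm_num)
  obtain ⟨n, hn⟩ := key 1 (by norm_num)
  have hm' : d 0 = (m:ℝ) * (2 * Real.pi) := hm
  have hn' : d 1 = (n:ℝ) * (2 * Real.pi) := hn
  have hmn : m = n := by
    by_contra hne
    have hπ : (0:ℝ) < 2 * Real.pi := by positivity
    rcases lt_or_gt_of_ne hne with h | h
    · have hv : ((m:ℝ) + 1/2) * (2 * Real.pi) ∈ Icc (d 0) (d 1) := by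
        rw [hm', hn']
        constructor
        · nlinarith
        · have : (m:ℝ) + 1 ≤ n := by exact_mod_cast h
          nlinarith
      obtain ⟨t, ht, hteq⟩ := intermediate_value_Icc (by norm_num : (0:ℝ) ≤ 1) hdc hv
      obtain ⟨k, hk⟩ := key t ht
      rw [hd] at hteq
      simp only at hteq
      rw [hk] at hteq
      have : (k:ℝ) = (m:ℝ) + 1/2 := by
        have := mul_right_cancel₀ (ne_of_gt hπ) hteq
        linarith
      have : (2*k : ℝ) = 2*m + 1 := by linarith
      have : (2*k : ℤ) = 2*m + 1 := by exact_mod_cast this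
      omega
    · have hv : ((n:ℝ) + 1/2) * (2 * Real.pi) ∈ Icc (d 1) (d 0) := by
        rw [hm', hn']
        constructor
        · nlinarith
        · have : (n:ℝ) + 1 ≤ m := by exact_mod_cast h
          nlinarith
      obtain ⟨t, ht, hteq⟩ := intermediate_value_Icc' (by norm_num : (0:ℝ) ≤ 1) hdc hv
      obtain ⟨k, hk⟩ := key t ht
      rw [hd] at hteq
      simp only at hteq
      rw [hk] at hteq
      have : (k:ℝ) = (n:ℝ) + 1/2 := by
        have := mul_right_cancel₀ (ne_of_gt hπ) hteq
        linarith
      have : (2*k : ℝ) = 2*n + 1 := by linarith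
      have : (2*k : ℤ) = 2*n + 1 := by exact_mod_cast this
      omega
  have : d 1 - d 0 = 0 := by rw [hm', hn', hmn]; ring
  simp only [hd] at this
  linarith

/-- Transferring an argument lift from `γ₂` to `γ₁` when the ratio `γ₁/γ₂`
stays in the right half-plane. -/
lemma lift_transfer (γ₁ γ₂ : ℝ → ℂ)
    (hc₁ : ContinuousOn γ₁ (Icc 0 1)) (hc₂ : ContinuousOn γ₂ (Icc 0 1))
    (h : ∀ t ∈ Icc (0:ℝ) 1, γ₂ t ≠ 0 ∧ 0 < ((γ₁ t) / (γ₂ t)).re)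
    (θ : ℝ → ℝ) (hθc : ContinuousOn θ (Icc 0 1))
    (hθ : ∀ t ∈ Icc (0:ℝ) 1, γ₂ t = (‖γ₂ t‖ : ℂ) * Complex.exp ((θ t : ℂ) * Complex.I)) :
    ContinuousOn (fun t => θ t + (γ₁ t / γ₂ t).arg) (Icc 0 1) ∧
    ∀ t ∈ Icc (0:ℝ) 1, γ₁ t =
      (‖γ₁ t‖ : ℂ) * Complex.exp (((θ t + (γ₁ t / γ₂ t).arg : ℝ) : ℂ) * Complex.I) := by
  have hq : ContinuousOn (fun t => γ₁ t / γ₂ t) (Icc 0 1) :=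
    hc₁.div hc₂ (fun t ht => (h t ht).1)
  have hargc : ContinuousOn (fun t => (γ₁ t / γ₂ t).arg) (Icc 0 1) := by
    intro t ht
    exact ContinuousAt.comp_continuousWithinAt (f := fun t => γ₁ t / γ₂ t)
      (g := Complex.arg)
      (Complex.continuousAt_arg (Complex.mem_slitPlane_iff.mpr (Or.inl (h t ht).2)))
      (hq t ht)
  refine ⟨hθc.add hargc, fun t ht => ?_⟩
  have h2 : γ₂ t ≠ 0 := (h t ht).1
  have hqne : γ₁ t / γ₂ t ≠ 0 := by
    intro hz
    have := (h t ht).2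
    rw [hz] at this; simp at this
  have h1 : γ₁ t ≠ 0 := by
    intro hz; exact hqne (by rw [hz, zero_div])
  have habs0 : (‖γ₁ t / γ₂ t‖ : ℂ) ≠ 0 := by
    simpa using (norm_ne_zero_iff.mpr hqne)
  have hexp : Complex.exp (((γ₁ t / γ₂ t).arg : ℂ) * Complex.I)
      = (γ₁ t / γ₂ t) / (‖γ₁ t / γ₂ t‖ : ℂ) := by
    rw [eq_div_iff habs0, mul_comm]
    exact Complex.norm_mul_exp_arg_mul_I (γ₁ t / γ₂ t)
  have hn1 : (‖γ₁ t‖ : ℂ) ≠ 0 := by simpa using norm_ne_zero_iff.mpr h1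
  have hn2 : (‖γ₂ t‖ : ℂ) ≠ 0 := by simpa using norm_ne_zero_iff.mpr h2
  have hexp2 : Complex.exp ((θ t : ℂ) * Complex.I) = γ₂ t / (‖γ₂ t‖ : ℂ) := by
    rw [eq_div_iff hn2, mul_comm]
    exact (hθ t ht).symm
  have hsplit : (((θ t + (γ₁ t / γ₂ t).arg : ℝ)) : ℂ) * Complex.I
      = (θ t : ℂ) * Complex.I + ((γ₁ t / γ₂ t).arg : ℂ) * Complex.I := by
    push_cast; ring
  have habs : (‖γ₁ t / γ₂ t‖ : ℂ) = (‖γ₁ t‖ : ℂ) / (‖γ₂ t‖ : ℂ) := by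
    rw [norm_div, Complex.ofReal_div]
  rw [hsplit, Complex.exp_add, hexp2, hexp, habs]
  have ha1 : (‖γ₁ t‖ : ℂ) ≠ 0 := by
    simpa using norm_ne_zero_iff.mpr h1
  have ha2 : (‖γ₂ t‖ : ℂ) ≠ 0 := by
    simpa using norm_ne_zero_iff.mpr h2
  field_simp

/-- Two nonvanishing paths whose ratio stays in the right half-plane and has
equal values at the endpoints have the same angular variation. -/
lemma angVar_congr (γ₁ γ₂ : ℝ → ℂ)
    (hc₁ : ContinuousOn γ₁ (Icc 0 1)) (hc₂ : ContinuousOn γ₂ (Icc 0 1))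
    (h : ∀ t ∈ Icc (0:ℝ) 1, γ₂ t ≠ 0 ∧ 0 < ((γ₁ t) / (γ₂ t)).re)
    (hend : γ₁ 0 / γ₂ 0 = γ₁ 1 / γ₂ 1) :
    angVar γ₁ = angVar γ₂ := by
  have h1ne : ∀ t ∈ Icc (0:ℝ) 1, γ₁ t ≠ 0 := by
    intro t ht hz
    have := (h t ht).2
    rw [hz, zero_div] at this
    simp at this
  have h' : ∀ t ∈ Icc (0:ℝ) 1, γ₁ t ≠ 0 ∧ 0 < ((γ₂ t) / (γ₁ t)).re := by
    intro t ht
    refine ⟨h1ne t ht, ?_⟩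
    have hi : γ₂ t / γ₁ t = (γ₁ t / γ₂ t)⁻¹ := by rw [inv_div]
    rw [hi, Complex.inv_re]
    exact div_pos (h t ht).2
      (Complex.normSq_pos.mpr (div_ne_zero (h1ne t ht) (h t ht).1))
  by_cases hE₂ : ∃ θ : ℝ → ℝ, ContinuousOn θ (Set.Icc 0 1) ∧
      ∀ t ∈ Set.Icc (0 : ℝ) 1, γ₂ t = (‖γ₂ t‖ : ℂ) * Complex.exp ((θ t : ℂ) * Complex.I)
  · have T := lift_transfer γ₁ γ₂ hc₁ hc₂ h hE₂.choose hE₂.choose_spec.1 hE₂.choose_spec.2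
    have hE₁ : ∃ θ : ℝ → ℝ, ContinuousOn θ (Set.Icc 0 1) ∧
        ∀ t ∈ Set.Icc (0 : ℝ) 1, γ₁ t = (‖γ₁ t‖ : ℂ) * Complex.exp ((θ t : ℂ) * Complex.I) :=
      ⟨_, T.1, T.2⟩
    rw [angVar, angVar, dif_pos hE₁, dif_pos hE₂]
    have u1 : hE₁.choose 1 - hE₁.choose 0 =
        (hE₂.choose 1 + ((γ₁ 1 / γ₂ 1)).arg) - (hE₂.choose 0 + ((γ₁ 0 / γ₂ 0)).arg) :=
      lift_diff_eq γ₁ h1ne hE₁.choose _ hE₁.choose_spec.1 T.1 hE₁.choose_spec.2 T.2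
    have u2 : hE₂.choose 1 - hE₂.choose 0 = hE₂.choose 1 - hE₂.choose 0 := rfl
    rw [u1, hend]
    ring_nf
  · have hE₁ : ¬ ∃ θ : ℝ → ℝ, ContinuousOn θ (Set.Icc 0 1) ∧
        ∀ t ∈ Set.Icc (0 : ℝ) 1, γ₁ t = (‖γ₁ t‖ : ℂ) * Complex.exp ((θ t : ℂ) * Complex.I) := by
      rintro ⟨θ, hθc, hθ⟩
      have T := lift_transfer γ₂ γ₁ hc₂ hc₁ h' θ hθc hθ
      exact hE₂ ⟨_, T.1, T.2⟩
    rw [angVar, angVar, dif_neg hE₁, dif_neg hE₂]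


theorem stmt12_enlace_eq_tourne_near_infinity
    (f : ℂ ≃ₜ ℂ) (I : HIsotopy f)
    (z' : ℂ) (hz' : z' ∈ FixPts ⇑f) :
    ∃ K : Set ℂ, IsCompact K ∧
      ∀ z ∈ FixPts ⇑f \ K, z ≠ z' → Enlace I z z' = Tourne I z := by
  -- bound on the trajectory of `z'`
  have hcz' : ContinuousOn (fun t => I.F t z') (Icc 0 1) :=
    (I.cont.comp (continuous_id.prodMk continuous_const)).continuousOn
  obtain ⟨C, hC⟩ := (isCompact_Icc).exists_bound_of_continuousOn hcz'
  have hC0 : 0 ≤ C := le_trans (norm_nonneg _) (hC 0 (by norm_num))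
  refine ⟨(fun p : ℝ × ℂ => (I.F p.1).symm p.2) '' (Icc 0 1 ×ˢ closedBall 0 (C + 1)),
    ((isCompact_Icc).prod (isCompact_closedBall 0 (C + 1))).image I.cont_symm, ?_⟩
  rintro z ⟨hzfix, hzK⟩ hzz'
  have hbig : ∀ t ∈ Icc (0:ℝ) 1, C + 1 < ‖I.F t z‖ := by
    intro t ht
    by_contra hle
    push_neg at hle
    exact hzK ⟨(t, I.F t z), ⟨ht, by simpa [mem_closedBall, dist_eq_norm] using hle⟩,
      (I.F t).symm_apply_apply z⟩
  have hcz : ContinuousOn (fun t => I.F t z) (Icc 0 1) :=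
    (I.cont.comp (continuous_id.prodMk continuous_const)).continuousOn
  have hkey : ∀ t ∈ Icc (0:ℝ) 1, I.F t z ≠ 0 ∧
      0 < ((I.F t z - I.F t z') / (I.F t z)).re := by
    intro t ht
    have hb := hbig t ht
    have hzne : I.F t z ≠ 0 := by
      intro hz0; rw [hz0] at hb; simp at hb; linarith
    refine ⟨hzne, ?_⟩
    have hsd : (I.F t z - I.F t z') / (I.F t z) = 1 - I.F t z' / I.F t z := by
      field_simp
    rw [hsd]
    have hre : ((I.F t z' / I.F t z)).re ≤ ‖I.F t z' / I.F t z‖ :=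
      le_trans (le_abs_self _) (Complex.abs_re_le_norm _)
    have habs : ‖I.F t z' / I.F t z‖ < 1 := by
      rw [norm_div, div_lt_one (by linarith)]
      have := hC t ht
      linarith
    have : ((1 : ℂ) - I.F t z' / I.F t z).re = 1 - ((I.F t z' / I.F t z)).re := by
      simp [Complex.sub_re]
    rw [this]
    linarith
  have hend : (I.F 0 z - I.F 0 z') / (I.F 0 z) = (I.F 1 z - I.F 1 z') / (I.F 1 z) := by
    have h0 : I.F 0 z = z := by rw [I.zero]; rfl
    have h0' : I.F 0 z' = z' := by rw [I.zero]; rfl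
    have h1 : I.F 1 z = z := by rw [I.one]; exact hzfix
    have h1' : I.F 1 z' = z' := by rw [I.one]; exact hz'
    rw [h0, h0', h1, h1']
  exact angVar_congr (fun t => I.F t z - I.F t z') (fun t => I.F t z)
    (hcz.sub hcz') hcz hkey hend


end
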